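/- (Inequality (EU) in the proof of Theorem 2) Assume the stability bound (NE2) with constant λ_max, and let λ̄ ≥ λ_max. Let e_w ∈ V, let 1 ≤ p ≤ n+1, and let I be a uniform random subset of size p of {0,1,…,n}. Then (p/(n+1)) a(P e_w, e_w) ≤ λ̄ ( ‖e_w‖² − E(‖e_w − λ̄^{-1} Σ_{i∈I} ω_i R_i T_i e_w‖²) ). -/

import Mathlib

open scoped RealInnerProductSpace

lemma aux_count {n : ℕ} (p : ℕ) (hp : 1 ≤ p) (f : Fin (n + 1) → ℝ) :
    ∑ I ∈ Finset.powersetCard p (Finset.univ : Finset (Fin (n + 1))), ∑ i ∈ I, f i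
      = (n.choose (p - 1) : ℝ) * ∑ i, f i := by
  have hcard : ∀ a : Fin (n + 1),
      ((Finset.powersetCard p (Finset.univ : Finset (Fin (n + 1)))).filter
        (fun I => a ∈ I)).card = n.choose (p - 1) := by
    intro a
    have : ((Finset.univ : Finset (Fin (n + 1))).erase a).card = n := by
      rw [Finset.card_erase_of_mem (Finset.mem_univ a)]; simp
    have hb : ((Finset.powersetCard p (Finset.univ : Finset (Fin (n + 1)))).filter
        (fun I => a ∈ I)).card
        = (Finset.powersetCard (p - 1) (Finset.univ.erase a)).card := by
      apply Finset.card_nbij' (fun I => I.erase a) (fun J => insert a J)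
      · intro I hI
        simp only [Finset.mem_coe, Finset.mem_filter, Finset.mem_powersetCard] at hI ⊢
        refine ⟨Finset.erase_subset_erase a hI.1.1, ?_⟩
        rw [Finset.card_erase_of_mem hI.2, hI.1.2]
      · intro J hJ
        simp only [Finset.mem_coe, Finset.mem_powersetCard, Finset.mem_filter] at hJ ⊢
        have haJ : a ∉ J := fun h => (Finset.mem_erase.1 (hJ.1 h)).1 rfl
        refine ⟨⟨Finset.subset_univ _, ?_⟩, Finset.mem_insert_self a J⟩
        rw [Finset.card_insert_of_notMem haJ, hJ.2]
        omega
      · intro I hI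
        simp only [Finset.mem_coe, Finset.mem_filter] at hI
        exact Finset.insert_erase hI.2
      · intro J hJ
        simp only [Finset.mem_coe, Finset.mem_powersetCard] at hJ
        have haJ : a ∉ J := fun h => (Finset.mem_erase.1 (hJ.1 h)).1 rfl
        exact Finset.erase_insert haJ
    rw [hb, Finset.card_powersetCard, this]
  calc ∑ I ∈ Finset.powersetCard p (Finset.univ : Finset (Fin (n + 1))), ∑ i ∈ I, f i
      = ∑ I ∈ Finset.powersetCard p (Finset.univ : Finset (Fin (n + 1))),
          ∑ i, if i ∈ I then f i else 0 := by
        refine Finset.sum_congr rfl fun I _ => ?_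
        rw [Finset.sum_ite_mem, Finset.univ_inter]
    _ = ∑ i, ∑ I ∈ Finset.powersetCard p (Finset.univ : Finset (Fin (n + 1))),
          if i ∈ I then f i else 0 := Finset.sum_comm
    _ = ∑ i, (n.choose (p - 1) : ℝ) * f i := by
        refine Finset.sum_congr rfl fun i _ => ?_
        rw [Finset.sum_ite, Finset.sum_const, Finset.sum_const, hcard i]
        simp [mul_comm]
    _ = (n.choose (p - 1) : ℝ) * ∑ i, f i := by rw [Finset.mul_sum]

/-- **inequality (EU) in the proof of Theorem 2.** Assume (NE2) with constant
`λ_max`, and let `λ̄ ≥ λ_max`. For `e_w ∈ V` and a uniform random subset `I` of size `p` of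
`{0,…,n}`:
`(p/(n+1)) a(P e_w, e_w) ≤ λ̄ (‖e_w‖² − E(‖e_w − λ̄⁻¹ ∑_{i∈I} ω_i R_i T_i e_w‖²))`. -/
theorem inequality_EU
    {V : Type*} [NormedAddCommGroup V] [InnerProductSpace ℝ V] [CompleteSpace V]
    {n : ℕ} {W : Fin (n + 1) → Type*}
    [∀ i, NormedAddCommGroup (W i)] [∀ i, InnerProductSpace ℝ (W i)]
    [∀ i, CompleteSpace (W i)]
    (R : ∀ i, W i →L[ℝ] V) (ω : Fin (n + 1) → ℝ) (hω : ∀ i, 0 < ω i)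
    (lmax lbar : ℝ) (hlmax : 0 < lmax) (hbar : lmax ≤ lbar)
    (hNE2 : ∀ w : ∀ i, W i,
      ‖∑ i, ω i • R i (w i)‖ ^ 2 ≤ lmax * ∑ i, ω i * ‖w i‖ ^ 2)
    (ew : V) (p : ℕ) (hp1 : 1 ≤ p) (hp2 : p ≤ n + 1) :
    ((p : ℝ) / (n + 1)) *
        ⟪(∑ i, ω i • R i ((ContinuousLinearMap.adjoint (R i)) ew)), ew⟫ ≤
      lbar * (‖ew‖ ^ 2 -
        (((n + 1).choose p : ℝ))⁻¹ *
          ∑ I ∈ Finset.powersetCard p (Finset.univ : Finset (Fin (n + 1))),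
            ‖ew - lbar⁻¹ • ∑ i ∈ I, ω i • R i ((ContinuousLinearMap.adjoint (R i)) ew)‖ ^ 2) := by
  have hlbar : 0 < lbar := lt_of_lt_of_le hlmax hbar
  set T : ∀ i, V →L[ℝ] W i := fun i => ContinuousLinearMap.adjoint (R i) with hT
  set g : Fin (n + 1) → V := fun i => ω i • R i (T i ew) with hg
  set A : Finset (Fin (n + 1)) → ℝ := fun I => ∑ i ∈ I, ω i * ‖T i ew‖ ^ 2 with hA
  -- inner product identity
  have h1 : ∀ I : Finset (Fin (n + 1)), ⟪∑ i ∈ I, g i, ew⟫ = A I := by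
    intro I
    rw [sum_inner]
    refine Finset.sum_congr rfl fun i _ => ?_
    rw [hg, real_inner_smul_left]
    congr 1
    rw [← ContinuousLinearMap.adjoint_inner_right (R i)]
    exact real_inner_self_eq_norm_sq _
  have hAnn : ∀ I : Finset (Fin (n + 1)), 0 ≤ A I := fun I =>
    Finset.sum_nonneg fun i _ => mul_nonneg (hω i).le (sq_nonneg _)
  -- restricted stability bound
  have h2 : ∀ I : Finset (Fin (n + 1)), ‖∑ i ∈ I, g i‖ ^ 2 ≤ lmax * A I := by
    intro I
    classical
    have := hNE2 (fun i => if i ∈ I then T i ew else 0)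
    have e1 : (∑ i, ω i • R i (if i ∈ I then T i ew else 0)) = ∑ i ∈ I, g i := by
      rw [← Finset.sum_subset (Finset.subset_univ I)
        (by intro i _ hi; simp [hi])]
      exact Finset.sum_congr rfl fun i hi => by simp [hi, hg]
    have e2 : (∑ i, ω i * ‖(if i ∈ I then T i ew else 0 : W i)‖ ^ 2) = A I := by
      rw [← Finset.sum_subset (Finset.subset_univ I)
        (by intro i _ hi; simp [hi])]
      exact Finset.sum_congr rfl fun i hi => by simp [hi]
    rwa [e1, e2] at this
  -- pointwise inequality per subset
  have hkey : ∀ I : Finset (Fin (n + 1)),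
      A I ≤ lbar * (‖ew‖ ^ 2 - ‖ew - lbar⁻¹ • ∑ i ∈ I, g i‖ ^ 2) := by
    intro I
    set S := ∑ i ∈ I, g i with hS
    have hexp : ‖ew - lbar⁻¹ • S‖ ^ 2
        = ‖ew‖ ^ 2 - 2 * lbar⁻¹ * A I + lbar⁻¹ ^ 2 * ‖S‖ ^ 2 := by
      rw [norm_sub_sq_real, real_inner_smul_right, real_inner_comm, h1 I,
        norm_smul, mul_pow]
      simp [abs_of_pos (inv_pos.2 hlbar)]
      ring
    rw [hexp]
    have hS2 : ‖S‖ ^ 2 ≤ lbar * A I :=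
      (h2 I).trans (mul_le_mul_of_nonneg_right hbar (hAnn I))
    have : lbar * (‖ew‖ ^ 2 - (‖ew‖ ^ 2 - 2 * lbar⁻¹ * A I + lbar⁻¹ ^ 2 * ‖S‖ ^ 2))
        = 2 * A I - lbar⁻¹ * ‖S‖ ^ 2 := by
      field_simp
      ring
    rw [this]
    have : lbar⁻¹ * ‖S‖ ^ 2 ≤ A I := by
      calc lbar⁻¹ * ‖S‖ ^ 2 ≤ lbar⁻¹ * (lbar * A I) :=
            mul_le_mul_of_nonneg_left hS2 (inv_pos.2 hlbar).le
        _ = A I := by field_simp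
    linarith
  -- sum over subsets
  set PP := Finset.powersetCard p (Finset.univ : Finset (Fin (n + 1))) with hPP
  have hsum : ∑ I ∈ PP, A I ≤
      lbar * ((((n + 1).choose p : ℝ)) * ‖ew‖ ^ 2 - ∑ I ∈ PP, ‖ew - lbar⁻¹ • ∑ i ∈ I, g i‖ ^ 2) := by
    calc ∑ I ∈ PP, A I
        ≤ ∑ I ∈ PP, lbar * (‖ew‖ ^ 2 - ‖ew - lbar⁻¹ • ∑ i ∈ I, g i‖ ^ 2) :=
          Finset.sum_le_sum fun I _ => hkey I
      _ = lbar * ((((n + 1).choose p : ℝ)) * ‖ew‖ ^ 2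
            - ∑ I ∈ PP, ‖ew - lbar⁻¹ • ∑ i ∈ I, g i‖ ^ 2) := by
          rw [← Finset.mul_sum, Finset.sum_sub_distrib, Finset.sum_const]
          congr 2
          rw [hPP, Finset.card_powersetCard, Finset.card_univ, Fintype.card_fin,
            nsmul_eq_mul]
  -- counting
  have hcount : ∑ I ∈ PP, A I = (n.choose (p - 1) : ℝ) * A Finset.univ := by
    exact aux_count p hp1 _
  have hN : (0 : ℝ) < ((n + 1).choose p : ℝ) := by
    exact_mod_cast Nat.choose_pos hp2
  have hfrac : (n.choose (p - 1) : ℝ) / ((n + 1).choose p : ℝ) = (p : ℝ) / (n + 1) := by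
    have hnat : (n + 1) * n.choose (p - 1) = (n + 1).choose p * p := by
      have := Nat.add_one_mul_choose_eq n (p - 1)
      have hp' : p - 1 + 1 = p := by omega
      simp only [Nat.succ_eq_add_one, hp'] at this
      exact this
    rw [div_eq_div_iff hN.ne' (by positivity)]
    have : ((n : ℝ) + 1) * (n.choose (p - 1) : ℝ) = ((n + 1).choose p : ℝ) * p := by
      exact_mod_cast hnat
    linarith [this]
  -- conclude
  show ((p : ℝ) / (n + 1)) * ⟪∑ i ∈ Finset.univ, g i, ew⟫ ≤
      lbar * (‖ew‖ ^ 2 - (((n + 1).choose p : ℝ))⁻¹ *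
        ∑ I ∈ PP, ‖ew - lbar⁻¹ • ∑ i ∈ I, g i‖ ^ 2)
  rw [h1 Finset.univ]
  have hfinal : (n.choose (p - 1) : ℝ) * A Finset.univ ≤
      lbar * ((((n + 1).choose p : ℝ)) * ‖ew‖ ^ 2
        - ∑ I ∈ PP, ‖ew - lbar⁻¹ • ∑ i ∈ I, g i‖ ^ 2) := hcount ▸ hsum
  rw [← hfrac, div_mul_eq_mul_div, div_le_iff₀ hN]
  calc (n.choose (p - 1) : ℝ) * A Finset.univ
      ≤ lbar * ((((n + 1).choose p : ℝ)) * ‖ew‖ ^ 2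
          - ∑ I ∈ PP, ‖ew - lbar⁻¹ • ∑ i ∈ I, g i‖ ^ 2) := hfinal
    _ = lbar * (‖ew‖ ^ 2 - (((n + 1).choose p : ℝ))⁻¹ *
          ∑ I ∈ PP, ‖ew - lbar⁻¹ • ∑ i ∈ I, g i‖ ^ 2) * ((n + 1).choose p : ℝ) := by
        have hNne : ((n + 1).choose p : ℝ) ≠ 0 := hN.ne'
        rw [mul_assoc]
        congr 1
        field_simp
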